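/- Let r > 0 and let (κ_k)_{k≥1} be positive reals with c₁ e^{−2rk} ≤ κ_k ≤ c₂ e^{−2rk} for all k ≥ 1, for some constants 0 < c₁ ≤ c₂. For each integer n ≥ 1 define F_n(λ) = λ + (1/n) Σ_{k=1}^∞ κ_k/(√λ + κ_k) for λ > 0. Then there exist constants 0 < d₁ ≤ d₂ < ∞ and N such that for all n ≥ N, every minimizer λ*_n of F_n over (0, ∞) satisfies d₁ n^{−1} ≤ λ*_n ≤ d₂ n^{−1}. -/

import Mathlib

private lemma exp_eq_pow (r : ℝ) (k : ℕ) :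
    Real.exp (-(2 * r * ((k : ℝ) + 1))) = Real.exp (-(2 * r)) ^ (k + 1) := by
  rw [← Real.exp_nat_mul]
  congr 1
  push_cast
  ring

private lemma diff_formula (κ s s' : ℝ) (hκ : 0 < κ) (hs' : 0 < s') (hs : 0 < s) :
    κ / (s' + κ) - κ / (s + κ) = κ * (s - s') / ((s' + κ) * (s + κ)) := by
  have h1 : s' + κ ≠ 0 := by positivity
  have h2 : s + κ ≠ 0 := by positivity
  field_simp
  ring

private lemma geom_head (ρ : ℝ) (h0 : 0 < ρ) (h1 : ρ < 1) (m : ℕ) :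
    ∑ k ∈ Finset.range m, (ρ⁻¹) ^ (k + 1) ≤ (ρ⁻¹) ^ m * (1 - ρ)⁻¹ := by
  induction m with
  | zero =>
    simp only [Finset.range_zero, Finset.sum_empty, pow_zero, one_mul]
    have : (0:ℝ) < 1 - ρ := by linarith
    positivity
  | succ m ih =>
    rw [Finset.sum_range_succ]
    have hne : ρ ≠ 0 := ne_of_gt h0
    have hne2 : (1 : ℝ) - ρ ≠ 0 := by intro h; nlinarith
    have key : (ρ⁻¹) ^ m * (1 - ρ)⁻¹ + (ρ⁻¹) ^ (m + 1) = (ρ⁻¹) ^ (m + 1) * (1 - ρ)⁻¹ := by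
      field_simp
      rw [pow_succ]; linear_combination (-(1 / ρ) ^ m) * mul_one_div_cancel hne
    linarith

private lemma summable_f (κ : ℕ → ℝ) (ρ c₂ : ℝ) (hρ0 : 0 < ρ) (hρ1 : ρ < 1)
    (hκpos : ∀ k, 0 < κ k) (hκub : ∀ k, κ k ≤ c₂ * ρ ^ (k + 1)) (s : ℝ) (hs : 0 < s) :
    Summable (fun k => κ k / (s + κ k)) := by
  have hgeo : Summable (fun k : ℕ => ρ ^ k) := summable_geometric_of_lt_one hρ0.le hρ1
  have hκsum : Summable κ := by
    apply Summable.of_nonneg_of_le (fun k => (hκpos k).le) hκub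
    exact (hgeo.mul_left (c₂ * ρ)).congr (fun k => by rw [pow_succ]; ring)
  apply Summable.of_nonneg_of_le (fun k => div_nonneg (hκpos k).le (by linarith [hκpos k])) (fun k => ?_) (hκsum.div_const s)
  exact div_le_div_of_nonneg_left (hκpos k).le hs (by linarith [(hκpos k)])

private lemma diff_bound (κ : ℕ → ℝ) (ρ c₁ c₂ : ℝ) (hρ0 : 0 < ρ) (hρ1 : ρ < 1)
    (hc₁ : 0 < c₁) (hc₂ : 0 < c₂)
    (hκlb : ∀ k : ℕ, c₁ * ρ ^ (k + 1) ≤ κ k) (hκub : ∀ k : ℕ, κ k ≤ c₂ * ρ ^ (k + 1))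
    (t s' : ℝ) (ht : 0 < t) (hs'0 : 0 < s') (hs't : s' ≤ t) (hhalf : t / 2 ≤ s') :
    (∑' k, κ k / (s' + κ k)) - (∑' k, κ k / (t + κ k)) ≤
      (1 + 2 * c₂ / c₁) * (1 - ρ)⁻¹ := by
  classical
  have hκpos : ∀ k, 0 < κ k := fun k => lt_of_lt_of_le (by positivity) (hκlb k)
  have h1ρ : (0:ℝ) < 1 - ρ := by linarith
  have hsum1 : Summable (fun k => κ k / (s' + κ k)) :=
    summable_f κ ρ c₂ hρ0 hρ1 hκpos hκub s' hs'0
  have hsum2 : Summable (fun k => κ k / (t + κ k)) :=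
    summable_f κ ρ c₂ hρ0 hρ1 hκpos hκub t ht
  set d : ℕ → ℝ := fun k => κ k / (s' + κ k) - κ k / (t + κ k) with hd
  have hdsum : Summable d := hsum1.sub hsum2
  have hdeq : ∀ k, d k = κ k * (t - s') / ((s' + κ k) * (t + κ k)) := fun k =>
    diff_formula (κ k) t s' (hκpos k) hs'0 ht
  have hd0 : ∀ k, 0 ≤ d k := by
    intro k
    rw [hdeq k]
    have h0 : 0 ≤ t - s' := by linarith
    have := hκpos k
    positivity
  -- upper bound 1 : d k ≤ (2*c₂/t) * ρ^(k+1)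
  have hub1 : ∀ k, d k ≤ 2 * c₂ / t * ρ ^ (k + 1) := by
    intro k
    rw [hdeq k]
    have hk := hκpos k
    have h1 : κ k * (t - s') / ((s' + κ k) * (t + κ k)) ≤ 2 * κ k / t := by
      rw [div_le_div_iff₀ (by positivity) ht]
      nlinarith [mul_pos hk ht, mul_pos hs'0 ht, mul_pos hk hk, mul_pos hs'0 hk]
    have h2 : 2 * κ k / t ≤ 2 * c₂ / t * ρ ^ (k + 1) := by
      have : 2 * c₂ / t * ρ ^ (k + 1) = 2 * (c₂ * ρ ^ (k + 1)) / t := by ring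
      rw [this, div_le_div_iff₀ ht ht]
      nlinarith [hκub k]
    linarith
  -- upper bound 2 : d k ≤ (t/c₁) * (ρ⁻¹)^(k+1)
  have hub2 : ∀ k, d k ≤ t / c₁ * (ρ⁻¹) ^ (k + 1) := by
    intro k
    rw [hdeq k]
    have hk := hκpos k
    have h1 : κ k * (t - s') / ((s' + κ k) * (t + κ k)) ≤ t / κ k := by
      rw [div_le_div_iff₀ (by positivity) hk]
      nlinarith [mul_nonneg (mul_nonneg ht.le hs'0.le) ht.le,
        mul_nonneg (mul_nonneg ht.le hs'0.le) hk.le,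
        mul_nonneg (mul_nonneg ht.le hk.le) ht.le,
        mul_nonneg (mul_nonneg hk.le hk.le) hs'0.le]
    have h2 : t / κ k ≤ t / c₁ * (ρ⁻¹) ^ (k + 1) := by
      have hpow : (0:ℝ) < ρ ^ (k + 1) := by positivity
      have e : t / c₁ * (ρ⁻¹) ^ (k + 1) = t / (c₁ * ρ ^ (k + 1)) := by
        rw [inv_pow]
        field_simp
      rw [e]
      exact div_le_div_of_nonneg_left ht.le (by positivity) (hκlb k)
    linarith
  -- index k₀
  obtain ⟨m, hm⟩ := exists_pow_lt_of_lt_one (show (0:ℝ) < t / (2 * c₂) by positivity) hρ1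
  have hex : ∃ k, 2 * c₂ * ρ ^ (k + 1) ≤ t := by
    refine ⟨m, ?_⟩
    have h1 : ρ ^ (m + 1) ≤ ρ ^ m := pow_le_pow_of_le_one hρ0.le hρ1.le (Nat.le_succ m)
    have h2 : ρ ^ m * (2 * c₂) < t := (lt_div_iff₀ (by positivity)).mp hm
    nlinarith [hc₂, h1]
  set k₀ := Nat.find hex with hk₀def
  have hk₀ : 2 * c₂ * ρ ^ (k₀ + 1) ≤ t := Nat.find_spec hex
  -- split the sum
  have hsplit := Summable.sum_add_tsum_nat_add k₀ hdsum
  -- tail bound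
  have htail : (∑' i, d (i + k₀)) ≤ (1 - ρ)⁻¹ := by
    have hgeo : Summable (fun k : ℕ => ρ ^ k) := summable_geometric_of_lt_one hρ0.le hρ1
    have h1 : ∀ i, d (i + k₀) ≤ ρ ^ i := by
      intro i
      have h2 := hub1 (i + k₀)
      have e : 2 * c₂ / t * ρ ^ (i + k₀ + 1) = ρ ^ i * (2 * c₂ * ρ ^ (k₀ + 1) / t) := by
        rw [show i + k₀ + 1 = i + (k₀ + 1) by ring, pow_add]
        ring
      have h3 : 2 * c₂ * ρ ^ (k₀ + 1) / t ≤ 1 := by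
        rw [div_le_one ht]; exact hk₀
      have h4 : ρ ^ i * (2 * c₂ * ρ ^ (k₀ + 1) / t) ≤ ρ ^ i := by
        have := mul_le_of_le_one_right (pow_nonneg hρ0.le i) h3
        linarith
      rw [e] at h2
      exact h2.trans h4
    calc (∑' i, d (i + k₀)) ≤ ∑' i, ρ ^ i :=
          Summable.tsum_le_tsum h1 ((summable_nat_add_iff k₀).mpr hdsum) hgeo
      _ = (1 - ρ)⁻¹ := tsum_geometric_of_lt_one hρ0.le hρ1
  -- head bound
  have hhead : (∑ k ∈ Finset.range k₀, d k) ≤ 2 * c₂ / c₁ * (1 - ρ)⁻¹ := by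
    rcases Nat.eq_zero_or_pos k₀ with h | h
    · rw [h]
      simp
      positivity
    · have hlt : t < 2 * c₂ * ρ ^ k₀ := by
        have h1 := Nat.find_min hex (show k₀ - 1 < k₀ by omega)
        have h2 : k₀ - 1 + 1 = k₀ := by omega
        rw [h2] at h1
        push_neg at h1
        exact h1
      have hbpow : t * (ρ ^ k₀)⁻¹ ≤ 2 * c₂ := by
        rw [← div_eq_mul_inv, div_le_iff₀ (pow_pos hρ0 k₀)]
        nlinarith [pow_pos hρ0 k₀]
      calc (∑ k ∈ Finset.range k₀, d k)
          ≤ ∑ k ∈ Finset.range k₀, t / c₁ * (ρ⁻¹) ^ (k + 1) :=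
            Finset.sum_le_sum (fun k _ => hub2 k)
        _ = t / c₁ * ∑ k ∈ Finset.range k₀, (ρ⁻¹) ^ (k + 1) := by
            rw [Finset.mul_sum]
        _ ≤ t / c₁ * ((ρ⁻¹) ^ k₀ * (1 - ρ)⁻¹) := by
            apply mul_le_mul_of_nonneg_left (geom_head ρ hρ0 hρ1 k₀) (by positivity)
        _ = t * (ρ ^ k₀)⁻¹ * ((1 - ρ)⁻¹ / c₁) := by
            rw [inv_pow]; ring
        _ ≤ 2 * c₂ * ((1 - ρ)⁻¹ / c₁) := by
            apply mul_le_mul_of_nonneg_right hbpow (by positivity)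
        _ = 2 * c₂ / c₁ * (1 - ρ)⁻¹ := by ring
  have heq : (∑' k, κ k / (s' + κ k)) - (∑' k, κ k / (t + κ k)) = ∑' k, d k :=
    (Summable.tsum_sub hsum1 hsum2).symm
  rw [heq, ← hsplit]
  have : (1 + 2 * c₂ / c₁) * (1 - ρ)⁻¹ = 2 * c₂ / c₁ * (1 - ρ)⁻¹ + (1 - ρ)⁻¹ := by ring
  linarith

private lemma frac_lb (ρ b t κv s₂ : ℝ) (hρ0 : 0 < ρ) (hb1 : 1 ≤ b) (ht : 0 < t)
    (hklb : t * ρ ≤ κv) (hkub : κv ≤ b * t) (hs₂lb : t + 2 * t / 5 ≤ s₂) (hs₂ub : s₂ ≤ 2 * t) :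
    2 * ρ / 5 / ((1 + b) * (2 + b)) ≤ κv * (s₂ - t) / ((t + κv) * (s₂ + κv)) := by
  have hκv : 0 < κv := lt_of_lt_of_le (by positivity) hklb
  have e : 2 * ρ / 5 / ((1 + b) * (2 + b)) = (2 * ρ / 5 * t ^ 2) / ((1 + b) * (2 + b) * t ^ 2) := by
    rw [mul_div_mul_right _ _ (by positivity : t ^ 2 ≠ 0)]
  rw [e]
  apply div_le_div₀ (by nlinarith) (by nlinarith)
    (mul_pos (by linarith) (by linarith)) (by nlinarith)
set_option maxHeartbeats 1600000 in
/-- If the eigenvalues decay exponentially, `κ_k ≍ e^{−2rk}` with `r > 0` (here `κ k`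
stands for `κ_{k+1}`), then for large `n` every minimizer over `(0,∞)` of
`F_n(λ) = λ + (1/n) Σ_k κ_k/(√λ + κ_k)` is of exact order `n^{−1}`. -/
theorem smoothing_parameter_order_exponential (r : ℝ) (hr : 0 < r)
    (κ : ℕ → ℝ) (c₁ c₂ : ℝ) (hc₁ : 0 < c₁) (hc : c₁ ≤ c₂)
    (hκ : ∀ k : ℕ, c₁ * Real.exp (-(2 * r * ((k : ℝ) + 1))) ≤ κ k ∧
                   κ k ≤ c₂ * Real.exp (-(2 * r * ((k : ℝ) + 1)))) :
    ∃ d₁ d₂ : ℝ, ∃ N : ℕ, 0 < d₁ ∧ d₁ ≤ d₂ ∧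
      ∀ n : ℕ, N ≤ n → ∀ l : ℝ, 0 < l →
        (∀ μ : ℝ, 0 < μ →
          l + (1 / (n : ℝ)) * (∑' k, κ k / (Real.sqrt l + κ k)) ≤
            μ + (1 / (n : ℝ)) * (∑' k, κ k / (Real.sqrt μ + κ k))) →
        d₁ * (n : ℝ)⁻¹ ≤ l ∧ l ≤ d₂ * (n : ℝ)⁻¹ := by
  have hc₂ : 0 < c₂ := lt_of_lt_of_le hc₁ hc
  set ρ : ℝ := Real.exp (-(2 * r)) with hρdef
  have hρ0 : 0 < ρ := Real.exp_pos _
  have hρ1 : ρ < 1 := by rw [hρdef, Real.exp_lt_one_iff]; nlinarith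
  have h1ρ : (0:ℝ) < 1 - ρ := by linarith
  have hκlb : ∀ k : ℕ, c₁ * ρ ^ (k + 1) ≤ κ k := fun k => by
    have := (hκ k).1; rwa [exp_eq_pow] at this
  have hκub : ∀ k : ℕ, κ k ≤ c₂ * ρ ^ (k + 1) := fun k => by
    have := (hκ k).2; rwa [exp_eq_pow] at this
  have hκpos : ∀ k, 0 < κ k := fun k => lt_of_lt_of_le (by positivity) (hκlb k)
  set C : ℝ := (1 + 2 * c₂ / c₁) * (1 - ρ)⁻¹ with hCdef
  have hC : 0 < C := by positivity
  set b : ℝ := c₂ / c₁ with hbdef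
  have hb1 : 1 ≤ b := (one_le_div hc₁).mpr hc
  set d₁ : ℝ := 2 * ρ / 5 / ((1 + b) * (2 + b)) with hd₁def
  have hd₁ : 0 < d₁ := by positivity
  refine ⟨d₁, max (2 * C) d₁, max 1 (⌈2 * C / (c₁ * ρ) ^ 2⌉₊ + 1), hd₁, le_max_right _ _, ?_⟩
  intro n hn l hl hmin
  have hn1 : 1 ≤ n := le_trans (le_max_left _ _) hn
  have hn0 : (0:ℝ) < (n : ℝ) := by exact_mod_cast Nat.lt_of_lt_of_le Nat.zero_lt_one hn1
  have ht : 0 < Real.sqrt l := Real.sqrt_pos.mpr hl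
  have hs'0 : 0 < Real.sqrt (l / 2) := Real.sqrt_pos.mpr (by linarith)
  have hs't : Real.sqrt (l / 2) ≤ Real.sqrt l := Real.sqrt_le_sqrt (by linarith)
  have hhalf : Real.sqrt l / 2 ≤ Real.sqrt (l / 2) := by
    have e : Real.sqrt (l / 4) = Real.sqrt l / 2 := by
      rw [show l / 4 = (Real.sqrt l / 2) ^ 2 by
        rw [div_pow, Real.sq_sqrt hl.le]; norm_num]
      exact Real.sqrt_sq (by positivity)
    rw [← e]
    exact Real.sqrt_le_sqrt (by linarith)
  -- Upper bound
  have hub := diff_bound κ ρ c₁ c₂ hρ0 hρ1 hc₁ hc₂ hκlb hκub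
    (Real.sqrt l) (Real.sqrt (l / 2)) ht hs'0 hs't hhalf
  have h1 := hmin (l / 2) (by linarith)
  have hlub : l ≤ 2 * C * (n : ℝ)⁻¹ := by
    have e1 : (1 / (n : ℝ)) * (∑' k, κ k / (Real.sqrt (l / 2) + κ k))
        - (1 / (n : ℝ)) * (∑' k, κ k / (Real.sqrt l + κ k))
        = (1 / (n : ℝ)) * ((∑' k, κ k / (Real.sqrt (l / 2) + κ k))
          - (∑' k, κ k / (Real.sqrt l + κ k))) := by ring
    have h2 : (1 / (n : ℝ)) * ((∑' k, κ k / (Real.sqrt (l / 2) + κ k))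
        - (∑' k, κ k / (Real.sqrt l + κ k))) ≤ (1 / (n : ℝ)) * C :=
      mul_le_mul_of_nonneg_left hub (by positivity)
    have e2 : 2 * ((1 / (n : ℝ)) * C) = 2 * C * (n : ℝ)⁻¹ := by ring
    linarith
  refine ⟨?_, le_trans hlub (mul_le_mul_of_nonneg_right (le_max_left _ _) (by positivity))⟩
  -- Lower bound
  have hX : 2 * C / (c₁ * ρ) ^ 2 ≤ (n : ℝ) := by
    have h1' : (2 * C / (c₁ * ρ) ^ 2) ≤ (⌈2 * C / (c₁ * ρ) ^ 2⌉₊ : ℝ) := Nat.le_ceil _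
    have h2' : (⌈2 * C / (c₁ * ρ) ^ 2⌉₊ + 1 : ℕ) ≤ n := le_trans (le_max_right _ _) hn
    have h3' : ((⌈2 * C / (c₁ * ρ) ^ 2⌉₊ + 1 : ℕ) : ℝ) ≤ (n : ℝ) := by exact_mod_cast h2'
    push_cast at h3'
    linarith
  have hlsq : l ≤ (c₁ * ρ) ^ 2 := by
    have h4 : 2 * C ≤ (n : ℝ) * (c₁ * ρ) ^ 2 := by
      have := (div_le_iff₀ (by positivity : (0:ℝ) < (c₁ * ρ) ^ 2)).mp hX
      linarith
    have h5 : 2 * C * (n : ℝ)⁻¹ ≤ (c₁ * ρ) ^ 2 := by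
      rw [← div_eq_mul_inv, div_le_iff₀ hn0]
      linarith
    linarith
  have htle : Real.sqrt l ≤ c₁ * ρ := by
    have h6 : Real.sqrt l ≤ Real.sqrt ((c₁ * ρ) ^ 2) := Real.sqrt_le_sqrt hlsq
    rwa [Real.sqrt_sq (by positivity)] at h6
  set t : ℝ := Real.sqrt l with htdef
  set x : ℝ := Real.log (c₁ / t) / (2 * r) - 1 with hxdef
  have hρe : ρ * Real.exp (2 * r) = 1 := by
    rw [hρdef, ← Real.exp_add]; norm_num
  have hx0 : 0 ≤ x := by
    have h7 : Real.exp (2 * r) ≤ c₁ / t := by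
      rw [le_div_iff₀ ht]
      have e := mul_le_mul_of_nonneg_left htle (Real.exp_pos (2 * r)).le
      have e2 : Real.exp (2 * r) * (c₁ * ρ) = c₁ := by linear_combination c₁ * hρe
      linarith
    have h8 : 2 * r ≤ Real.log (c₁ / t) := (Real.le_log_iff_exp_le (by positivity)).mpr h7
    have h9 : 1 ≤ Real.log (c₁ / t) / (2 * r) := (le_div_iff₀ (by linarith)).mpr (by linarith)
    rw [hxdef]; linarith
  have h2rx : 2 * r * x = Real.log (c₁ / t) - 2 * r := by
    rw [hxdef]; field_simp
  have hlogexp : Real.exp (-(Real.log (c₁ / t))) = t / c₁ := by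
    rw [Real.exp_neg, Real.exp_log (by positivity), inv_div]
  set k' : ℕ := ⌈x⌉₊ with hk'def
  have hk'1 : x ≤ (k' : ℝ) := Nat.le_ceil x
  have hk'2 : (k' : ℝ) ≤ x + 1 := (Nat.ceil_lt_add_one hx0).le
  have hklb : t * ρ ≤ κ k' := by
    have e0 : 2 * r * (k' : ℝ) ≤ 2 * r * (x + 1) :=
      mul_le_mul_of_nonneg_left hk'2 (by positivity)
    have e1 : Real.exp (-(2 * r * (x + 2))) ≤ Real.exp (-(2 * r * ((k' : ℝ) + 1))) :=
      Real.exp_le_exp.mpr (by linarith)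
    have e2 : Real.exp (-(2 * r * (x + 2))) = t / c₁ * ρ := by
      have e3 : -(2 * r * (x + 2)) = -(Real.log (c₁ / t)) + -(2 * r) := by
        linear_combination -h2rx
      rw [e3, Real.exp_add, hlogexp, hρdef]
    have e4 := (hκ k').1
    have e5 := mul_le_mul_of_nonneg_left e1 hc₁.le
    rw [e2] at e5
    have e6 : c₁ * (t / c₁ * ρ) = t * ρ := by field_simp
    linarith
  have hkub : κ k' ≤ b * t := by
    have e0 : 2 * r * x ≤ 2 * r * (k' : ℝ) :=
      mul_le_mul_of_nonneg_left hk'1 (by positivity)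
    have e1 : Real.exp (-(2 * r * ((k' : ℝ) + 1))) ≤ Real.exp (-(2 * r * (x + 1))) :=
      Real.exp_le_exp.mpr (by linarith)
    have e2 : Real.exp (-(2 * r * (x + 1))) = t / c₁ := by
      have e3 : -(2 * r * (x + 1)) = -(Real.log (c₁ / t)) := by
        linear_combination -h2rx
      rw [e3, hlogexp]
    have e4 := (hκ k').2
    have e5 := mul_le_mul_of_nonneg_left e1 hc₂.le
    rw [e2] at e5
    have e6 : c₂ * (t / c₁) = b * t := by rw [hbdef]; field_simp
    linarith
  -- compare with μ = 2l
  have hs₂ : Real.sqrt (2 * l) = Real.sqrt 2 * t := by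
    rw [Real.sqrt_mul (by norm_num : (0:ℝ) ≤ 2) l, htdef]
  have hsq2 : Real.sqrt 2 ^ 2 = 2 := Real.sq_sqrt (by norm_num)
  have hsq2n : 0 ≤ Real.sqrt 2 := Real.sqrt_nonneg 2
  have hsqrt2_lb : (1.4 : ℝ) ≤ Real.sqrt 2 := by nlinarith [hsq2, hsq2n]
  have hsqrt2_ub : Real.sqrt 2 ≤ 2 := by nlinarith [hsq2, hsq2n]
  have hs₂lb : t + 2 * t / 5 ≤ Real.sqrt (2 * l) := by
    rw [hs₂]
    have := mul_le_mul_of_nonneg_right hsqrt2_lb ht.le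
    linarith
  have hs₂ub : Real.sqrt (2 * l) ≤ 2 * t := by
    rw [hs₂]
    have := mul_le_mul_of_nonneg_right hsqrt2_ub ht.le
    linarith
  have hs₂0 : 0 < Real.sqrt (2 * l) := Real.sqrt_pos.mpr (by linarith)
  have hts₂ : t ≤ Real.sqrt (2 * l) := by linarith
  have hsum1 : Summable (fun k => κ k / (t + κ k)) :=
    summable_f κ ρ c₂ hρ0 hρ1 hκpos hκub t ht
  have hsum2 : Summable (fun k => κ k / (Real.sqrt (2 * l) + κ k)) :=
    summable_f κ ρ c₂ hρ0 hρ1 hκpos hκub _ hs₂0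
  set d : ℕ → ℝ := fun k => κ k / (t + κ k) - κ k / (Real.sqrt (2 * l) + κ k) with hddef
  have hdeq : ∀ k, d k = κ k * (Real.sqrt (2 * l) - t) / ((t + κ k) * (Real.sqrt (2 * l) + κ k)) :=
    fun k => diff_formula (κ k) (Real.sqrt (2 * l)) t (hκpos k) ht hs₂0
  have hd0 : ∀ k, 0 ≤ d k := by
    intro k
    rw [hdeq k]
    have h0 : 0 ≤ Real.sqrt (2 * l) - t := by linarith
    have := hκpos k
    positivity
  have hdsum : Summable d := hsum1.sub hsum2
  have hterm : d₁ ≤ d k' := by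
    rw [hdeq k', hd₁def]
    exact frac_lb ρ b t (κ k') (Real.sqrt (2 * l)) hρ0 hb1 ht hklb hkub hs₂lb hs₂ub
  have hlow : d₁ ≤ (n : ℝ) * l := by
    have h5 := hmin (2 * l) (by linarith)
    have h6 : d₁ ≤ ∑' k, d k :=
      le_trans hterm (Summable.le_tsum hdsum k' (fun j _ => hd0 j))
    have h7 : (∑' k, d k) = (∑' k, κ k / (t + κ k))
        - ∑' k, κ k / (Real.sqrt (2 * l) + κ k) := Summable.tsum_sub hsum1 hsum2
    have h8 : (1 / (n : ℝ)) * d₁ ≤ l := by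
      have h9 : (1 / (n : ℝ)) * ((∑' k, κ k / (t + κ k))
          - ∑' k, κ k / (Real.sqrt (2 * l) + κ k)) ≤ l := by
        have e : (1 / (n : ℝ)) * ((∑' k, κ k / (t + κ k))
            - ∑' k, κ k / (Real.sqrt (2 * l) + κ k))
            = (1 / (n : ℝ)) * (∑' k, κ k / (t + κ k))
              - (1 / (n : ℝ)) * ∑' k, κ k / (Real.sqrt (2 * l) + κ k) := by ring
        linarith
      have h10 : (1 / (n : ℝ)) * d₁ ≤ (1 / (n : ℝ)) * ((∑' k, κ k / (t + κ k))
          - ∑' k, κ k / (Real.sqrt (2 * l) + κ k)) := by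
        apply mul_le_mul_of_nonneg_left _ (by positivity)
        rw [← h7]; exact h6
      linarith
    have h11 := mul_le_mul_of_nonneg_left h8 hn0.le
    have e5 : (n : ℝ) * ((1 / (n : ℝ)) * d₁) = d₁ := by field_simp
    linarith
  have e6 : d₁ * (n : ℝ)⁻¹ ≤ ((n : ℝ) * l) * (n : ℝ)⁻¹ :=
    mul_le_mul_of_nonneg_right hlow (by positivity)
  have e7 : ((n : ℝ) * l) * (n : ℝ)⁻¹ = l := by field_simp
  linarith
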